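/- Let P ⊆ 𝒫 be finite, δ ∈ D^P_k a d-canonical formula, and p an atom. Then δ ⊨ δ^p, i.e., every pointed Kripke model satisfying δ satisfies the remainder δ^p of eliminating p. -/
import Mathlib


/-!
Common framework: multi-agent epistemic modal logic with distributed knowledge.
Agents are `Fin n`, atoms are natural numbers.
-/

namespace DKLogic

/-- Formulas of the language `L_D`: atoms, negation, conjunction, disjunction and the
distributed-knowledge modality `D_B` for nonempty sets `B` of agents (together with the
constants `⊤`/`⊥`, which the paper uses as the empty conjunction/disjunction). -/
inductive Formula (n : ℕ) : Type
  | top : Formula n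
  | bot : Formula n
  | atom : ℕ → Formula n
  | neg : Formula n → Formula n
  | and : Formula n → Formula n → Formula n
  | or : Formula n → Formula n → Formula n
  | D : {B : Finset (Fin n) // B.Nonempty} → Formula n → Formula n

namespace Formula

/-- Modal depth of a formula. -/
def depth {n : ℕ} : Formula n → ℕ
  | top => 0
  | bot => 0
  | atom _ => 0
  | neg φ => depth φ
  | and φ ψ => max (depth φ) (depth ψ)
  | or φ ψ => max (depth φ) (depth ψ)
  | D _ φ => depth φ + 1

/-- The atoms occurring in a formula. -/
def atoms {n : ℕ} : Formula n → Finset ℕ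
  | top => ∅
  | bot => ∅
  | atom q => {q}
  | neg φ => atoms φ
  | and φ ψ => atoms φ ∪ atoms ψ
  | or φ ψ => atoms φ ∪ atoms ψ
  | D _ φ => atoms φ

end Formula

/-- A Kripke model over world type `W` with `n` agents. -/
structure KModel (n : ℕ) (W : Type) where
  R : Fin n → W → W → Prop
  V : W → Set ℕ

/-- The distributed accessibility relation `R_B = ⋂_{i ∈ B} R_i`. -/
def KModel.RB {n : ℕ} {W : Type} (M : KModel n W) (B : Finset (Fin n)) (s t : W) : Prop :=
  ∀ i ∈ B, M.R i s t

/-- Satisfaction. -/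
def Sat {n : ℕ} {W : Type} (M : KModel n W) : W → Formula n → Prop
  | _, .top => True
  | _, .bot => False
  | s, .atom q => q ∈ M.V s
  | s, .neg φ => ¬ Sat M s φ
  | s, .and φ ψ => Sat M s φ ∧ Sat M s ψ
  | s, .or φ ψ => Sat M s φ ∨ Sat M s ψ
  | s, .D B φ => ∀ t : W, M.RB B.1 s t → Sat M t φ

/-- Seriality of a relation. -/
def Serial {W : Type} (R : W → W → Prop) : Prop := ∀ x, ∃ y, R x y

/-- Euclideanness of a relation. -/
def Euclidean {W : Type} (R : W → W → Prop) : Prop := ∀ x y z, R x y → R x z → R y z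

/-- The six modal systems. -/
inductive MSys : Type
  | K | D | T | K45 | KD45 | S5

/-- `L`-models: frame conditions on each accessibility relation for each system. -/
def IsModel {n : ℕ} {W : Type} : MSys → KModel n W → Prop
  | .K, _ => True
  | .D, M => ∀ i, Serial (M.R i)
  | .T, M => ∀ i, Reflexive (M.R i)
  | .K45, M => ∀ i, Transitive (M.R i) ∧ Euclidean (M.R i)
  | .KD45, M => ∀ i, Serial (M.R i) ∧ Transitive (M.R i) ∧ Euclidean (M.R i)
  | .S5, M => ∀ i, Reflexive (M.R i) ∧ Transitive (M.R i) ∧ Euclidean (M.R i)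

/-- Semantic consequence over `L`-models. -/
def Entails {n : ℕ} (L : MSys) (φ ψ : Formula n) : Prop :=
  ∀ (W : Type) (M : KModel n W), IsModel L M → ∀ s : W, Sat M s φ → Sat M s ψ

/-- Semantic equivalence over `L`-models. -/
def EquivL {n : ℕ} (L : MSys) (φ ψ : Formula n) : Prop :=
  Entails L φ ψ ∧ Entails L ψ φ

/-- `L`-satisfiability. -/
def SatL {n : ℕ} (L : MSys) (φ : Formula n) : Prop :=
  ∃ (W : Type) (M : KModel n W) (s : W), IsModel L M ∧ Sat M s φ

/-- Collective `p`-bisimulation between two pointed models. -/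
def CollPBisim {n : ℕ} {W W' : Type} (M : KModel n W) (s : W) (M' : KModel n W') (s' : W')
    (p : ℕ) : Prop :=
  ∃ ρ : W → W' → Prop, ρ s s' ∧
    ∀ u u', ρ u u' →
      ((∀ q : ℕ, q ≠ p → (q ∈ M.V u ↔ q ∈ M'.V u')) ∧
       (∀ B : Finset (Fin n), B.Nonempty → ∀ v, M.RB B u v → ∃ v', M'.RB B u' v' ∧ ρ v v') ∧
       (∀ B : Finset (Fin n), B.Nonempty → ∀ v', M'.RB B u' v' → ∃ v, M.RB B u v ∧ ρ v v'))

/-- `ψ` is a result of forgetting `p` in `φ` in system `L`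
(written `dforget_L(φ,p) ≡_L ψ` in the paper). -/
def IsForget {n : ℕ} (L : MSys) (φ : Formula n) (p : ℕ) (ψ : Formula n) : Prop :=
  ψ.atoms ⊆ φ.atoms.erase p ∧
  (∀ (W W' : Type) (M : KModel n W) (M' : KModel n W') (s : W) (s' : W'),
      IsModel L M → IsModel L M' → Sat M s φ → CollPBisim M s M' s' p → Sat M' s' ψ) ∧
  (∀ (W' : Type) (M' : KModel n W') (s' : W'),
      IsModel L M' → Sat M' s' ψ →
      ∃ (W : Type) (M : KModel n W) (s : W), IsModel L M ∧ Sat M s φ ∧ CollPBisim M s M' s' p)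

/-- `L` is closed under forgetting: `dforget_L(φ,p)` exists (as an `L`-satisfiable formula)
for every `L`-satisfiable `φ` and every atom `p`. -/
def ClosedUnderForgetting {n : ℕ} (L : MSys) : Prop :=
  ∀ (φ : Formula n) (p : ℕ), SatL L φ → ∃ ψ : Formula n, SatL L ψ ∧ IsForget L φ p ψ

/-- `ψ` is a uniform interpolant of `φ` in `L` over `P \ {p}`. -/
def IsUI {n : ℕ} (L : MSys) (P : Finset ℕ) (p : ℕ) (φ ψ : Formula n) : Prop :=
  SatL L ψ ∧ ψ.atoms ⊆ P.erase p ∧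
  ∀ χ : Formula n, p ∉ χ.atoms → (Entails L φ χ ↔ Entails L ψ χ)

/-- The uniform interpolation property for the system `L`. -/
def HasUIP {n : ℕ} (L : MSys) : Prop :=
  ∀ (P : Finset ℕ) (p : ℕ) (φ : Formula n),
    p ∈ P → φ.atoms ⊆ P → SatL L φ → ∃ ψ : Formula n, IsUI L P p φ ψ

/-! ### Canonical formulas -/

/-- Big conjunction of a list of formulas (`⊤` for the empty list). -/
def bigAnd {n : ℕ} : List (Formula n) → Formula n
  | [] => .top
  | φ :: l => .and φ (bigAnd l)

/-- Big disjunction of a list of formulas (`⊥` for the empty list). -/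
def bigOr {n : ℕ} : List (Formula n) → Formula n
  | [] => .bot
  | φ :: l => .or φ (bigOr l)

/-- An injective numerical code of formulas, used to fix a canonical ordering. -/
def fcode {n : ℕ} : Formula n → ℕ
  | .top => Nat.pair 0 0
  | .bot => Nat.pair 1 0
  | .atom q => Nat.pair 2 q
  | .neg φ => Nat.pair 3 (fcode φ)
  | .and φ ψ => Nat.pair 4 (Nat.pair (fcode φ) (fcode ψ))
  | .or φ ψ => Nat.pair 5 (Nat.pair (fcode φ) (fcode ψ))
  | .D B φ => Nat.pair 6 (Nat.pair (B.1.sum fun i => 2 ^ (i : ℕ)) (fcode φ))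

/-- Insert a formula into a strictly `fcode`-sorted list (dropping duplicates). -/
def insertF {n : ℕ} (φ : Formula n) : List (Formula n) → List (Formula n)
  | [] => [φ]
  | ψ :: l =>
      if fcode φ < fcode ψ then φ :: ψ :: l
      else if fcode φ = fcode ψ then ψ :: l
      else ψ :: insertF φ l

/-- The canonical (sorted, duplicate-free) list representing the set of formulas in `l`. -/
def normList {n : ℕ} (l : List (Formula n)) : List (Formula n) := l.foldr insertF []

/-- The minterm of `P` that is positive exactly on `S`. -/
def minterm {n : ℕ} (P S : Finset ℕ) : Formula n :=
  bigAnd ((P.sort (· ≤ ·)).map fun q =>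
    if q ∈ S then Formula.atom q else Formula.neg (Formula.atom q))

/-- The subset of `Fin n` whose characteristic bits are those of `m`. -/
def natToFinset (n m : ℕ) : Finset (Fin n) :=
  Finset.univ.filter fun i => m.testBit (i : ℕ)

/-- A canonical enumeration of all nonempty subsets of the agent set. -/
def neSubsets (n : ℕ) : List {B : Finset (Fin n) // B.Nonempty} :=
  ((List.range (2 ^ n)).map (natToFinset n)).filterMap fun B =>
    if h : B.Nonempty then some ⟨B, h⟩ else none

/-- `∇_B Φ = D_B (⋁Φ) ∧ ⋀_{φ ∈ Φ} ¬ D_B ¬ φ`. -/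
def nabla {n : ℕ} (B : {B : Finset (Fin n) // B.Nonempty}) (Φ : List (Formula n)) : Formula n :=
  Formula.and (Formula.D B (bigOr Φ))
    (bigAnd (Φ.map fun φ => Formula.neg (Formula.D B (Formula.neg φ))))

/-- Underlying data of a d-canonical formula: a set of (positive) atoms together with,
for every set `B` of agents, a list of successor data. -/
inductive CData (n : ℕ) : Type
  | mk (S : Finset ℕ) (succ : Finset (Fin n) → List (CData n)) : CData n

/-- The positive-atom component. -/
def CData.S {n : ℕ} : CData n → Finset ℕ
  | mk S _ => S

/-- The `B`-successor data. -/
def CData.succ {n : ℕ} : CData n → Finset (Fin n) → List (CData n)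
  | mk _ f => f

/-- The d-canonical formula of depth `k` over `P` determined by the data `d`:
`δ_0 ∧ ⋀_{B} ∇_B Φ_B`. -/
def toFormula {n : ℕ} (P : Finset ℕ) : ℕ → CData n → Formula n
  | 0, d => minterm P (d.S ∩ P)
  | (k+1), d =>
      Formula.and (minterm P (d.S ∩ P))
        (bigAnd ((neSubsets n).map fun B =>
          nabla B (normList ((d.succ B.1).map fun c => toFormula P k c))))

/-- `D^P_k`: the set of d-canonical formulas of depth `k` over `P`. -/
def DP {n : ℕ} (P : Finset ℕ) (k : ℕ) : Set (Formula n) := Set.range (toFormula P k)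

/-- `R_B(δ)` for `δ` the level-`k` canonical formula with data `d`:
the set of `B`-successor canonical formulas (of level `k - 1`). -/
def RBset {n : ℕ} (P : Finset ℕ) (k : ℕ) (d : CData n) (B : Finset (Fin n)) :
    Set (Formula n) :=
  {φ | ∃ c ∈ d.succ B, φ = toFormula P (k - 1) c}

/-- One pruning step `δ ↦ δ^↓` on data (first argument: the level of the input). -/
def downD {n : ℕ} : ℕ → CData n → CData n
  | 0, d => d
  | 1, d => CData.mk d.S (fun _ => [])
  | (k+2), d => CData.mk d.S (fun B => (d.succ B).map fun c => downD (k+1) c)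

/-- `l`-fold pruning `δ ↦ δ^{↓l}` on data (first argument: the level of the input). -/
def downIter {n : ℕ} : ℕ → ℕ → CData n → CData n
  | _, 0, d => d
  | k, (l+1), d => downIter (k-1) l (downD k d)

/-- Truncation `δ ↦ δ^{↑l}` on data (first argument: the level of the input). -/
def upD {n : ℕ} : ℕ → ℕ → CData n → CData n
  | _, 0, d => CData.mk d.S (fun _ => [])
  | 0, (_+1), d => d
  | (k+1), (l+1), d => CData.mk d.S (fun B => (d.succ B).map fun c => upD k l c)

/-- The canonical formula `δ` of level `k` with data `d`. -/
def cf {n : ℕ} (P : Finset ℕ) (k : ℕ) (d : CData n) : Formula n := toFormula P k d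

/-- `δ^{↓l}` (a canonical formula of level `k - l`). -/
def cfDown {n : ℕ} (P : Finset ℕ) (k l : ℕ) (d : CData n) : Formula n :=
  toFormula P (k - l) (downIter k l d)

/-- `δ^{↑l}` (a canonical formula of level `min k l`). -/
def cfUp {n : ℕ} (P : Finset ℕ) (k l : ℕ) (d : CData n) : Formula n :=
  toFormula P (min k l) (upD k l d)

/-- Literal elimination: `φ^p` replaces every occurrence of `¬p` by `⊤` and subsequently
every remaining occurrence of `p` by `⊤`. -/
def elim {n : ℕ} (p : ℕ) : Formula n → Formula n
  | .top => .top
  | .bot => .bot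
  | .atom q => if q = p then .top else .atom q
  | .neg (.atom q) => if q = p then .top else .neg (.atom q)
  | .neg φ => .neg (elim p φ)
  | .and φ ψ => .and (elim p φ) (elim p ψ)
  | .or φ ψ => .or (elim p φ) (elim p ψ)
  | .D B φ => .D B (elim p φ)


lemma sat_bigAnd {n : ℕ} {W : Type} (M : KModel n W) (s : W) :
    ∀ l : List (Formula n), Sat M s (bigAnd l) ↔ ∀ φ ∈ l, Sat M s φ
  | [] => by simp [bigAnd, Sat]
  | φ :: l => by simp [bigAnd, Sat, sat_bigAnd M s l]

lemma sat_bigOr {n : ℕ} {W : Type} (M : KModel n W) (s : W) :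
    ∀ l : List (Formula n), Sat M s (bigOr l) ↔ ∃ φ ∈ l, Sat M s φ
  | [] => by simp [bigOr, Sat]
  | φ :: l => by simp [bigOr, Sat, sat_bigOr M s l]

lemma elim_bigAnd {n : ℕ} (p : ℕ) :
    ∀ l : List (Formula n), elim p (bigAnd l) = bigAnd (l.map (elim p))
  | [] => rfl
  | φ :: l => by simp [bigAnd, elim, elim_bigAnd p l]

lemma elim_bigOr {n : ℕ} (p : ℕ) :
    ∀ l : List (Formula n), elim p (bigOr l) = bigOr (l.map (elim p))
  | [] => rfl
  | φ :: l => by simp [bigOr, elim, elim_bigOr p l]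

lemma mem_insertF {n : ℕ} (φ x : Formula n) :
    ∀ l, x ∈ insertF φ l → x = φ ∨ x ∈ l
  | [] => by simp [insertF]
  | ψ :: l => by
    simp only [insertF]
    split
    · intro h; rcases List.mem_cons.mp h with h | h
      · exact Or.inl h
      · exact Or.inr h
    · split
      · exact fun h => Or.inr h
      · intro h
        rcases List.mem_cons.mp h with h | h
        · exact Or.inr (List.mem_cons.mpr (Or.inl h))
        · rcases mem_insertF φ x l h with h | h
          · exact Or.inl h
          · exact Or.inr (List.mem_cons.mpr (Or.inr h))

lemma mem_normList {n : ℕ} (x : Formula n) :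
    ∀ l : List (Formula n), x ∈ normList l → x ∈ l
  | [] => by simp [normList]
  | φ :: l => by
    intro h
    simp only [normList, List.foldr] at h
    rcases mem_insertF φ x _ h with h | h
    · simp [h]
    · exact List.mem_cons.mpr (Or.inr (mem_normList x l h))

lemma elim_neg_ne_atom {n : ℕ} (p : ℕ) (φ : Formula n) (h : ∀ q, φ ≠ .atom q) :
    elim p (.neg φ) = .neg (elim p φ) := by
  cases φ <;> simp_all [elim]

lemma bigAnd_ne_atom {n : ℕ} (l : List (Formula n)) (q : ℕ) : bigAnd l ≠ .atom q := by
  cases l <;> simp [bigAnd]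

lemma toFormula_ne_atom {n : ℕ} (P : Finset ℕ) (k : ℕ) (d : CData n) (q : ℕ) :
    toFormula P k d ≠ .atom q := by
  cases k <;> simp [toFormula, minterm, bigAnd_ne_atom]

lemma sat_elim_minterm {n : ℕ} {W : Type} (M : KModel n W) (s : W) (P S : Finset ℕ)
    (p : ℕ) (h : Sat M s (minterm (n := n) P S)) : Sat M s (elim p (minterm P S)) := by
  unfold minterm at h ⊢
  rw [elim_bigAnd, sat_bigAnd]
  rw [sat_bigAnd] at h
  intro φ hφ
  rw [List.map_map, List.mem_map] at hφ
  obtain ⟨q, hq, rfl⟩ := hφ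
  have hs := h _ (List.mem_map.mpr ⟨q, hq, rfl⟩)
  by_cases hqS : q ∈ S
  · simp only [hqS, if_true, Function.comp] at hs ⊢
    by_cases hqp : q = p <;> simp [elim, hqp, Sat, hs]
  · simp only [hqS, if_false, Function.comp] at hs ⊢
    by_cases hqp : q = p <;> simp [elim, hqp, Sat] at hs ⊢ <;> exact hs

lemma sat_elim_toFormula {n : ℕ} (P : Finset ℕ) (p : ℕ) :
    ∀ (k : ℕ) (d : CData n) (W : Type) (M : KModel n W) (s : W),
      Sat M s (toFormula P k d) → Sat M s (elim p (toFormula P k d))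
  | 0, d, W, M, s => by
    intro h
    exact sat_elim_minterm M s P _ p h
  | (k+1), d, W, M, s => by
    intro h
    simp only [toFormula] at h ⊢
    simp only [elim]
    obtain ⟨h0, h1⟩ := h
    refine ⟨sat_elim_minterm M s P _ p h0, ?_⟩
    rw [elim_bigAnd, sat_bigAnd]
    rw [sat_bigAnd] at h1
    intro φ hφ
    rw [List.map_map, List.mem_map] at hφ
    obtain ⟨B, _, rfl⟩ := hφ
    have hsB := h1 _ (List.mem_map.mpr ⟨B, by assumption, rfl⟩)
    -- hsB : Sat M s (nabla B Φ) ; goal : Sat M s (elim p (nabla B Φ))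
    set Φ := normList ((d.succ B.1).map fun c => toFormula P k c) with hΦ
    have hmem : ∀ φ ∈ Φ, ∃ c, φ = toFormula P k c := by
      intro φ hφmem
      have := mem_normList φ _ hφmem
      rw [List.mem_map] at this
      obtain ⟨c, _, rfl⟩ := this
      exact ⟨c, rfl⟩
    have hIH : ∀ φ ∈ Φ, ∀ (t : W), Sat M t φ → Sat M t (elim p φ) := by
      intro φ hφmem t ht
      obtain ⟨c, rfl⟩ := hmem φ hφmem
      exact sat_elim_toFormula P p k c W M t ht
    simp only [Function.comp, nabla, elim] at hsB ⊢
    obtain ⟨hD, hnabla⟩ := hsB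
    constructor
    · rw [elim_bigOr]
      intro t hRt
      have := hD t hRt
      rw [sat_bigOr] at this ⊢
      obtain ⟨φ, hφmem, hφsat⟩ := this
      exact ⟨elim p φ, List.mem_map.mpr ⟨φ, hφmem, rfl⟩, hIH φ hφmem t hφsat⟩
    · rw [elim_bigAnd, sat_bigAnd]
      rw [sat_bigAnd] at hnabla
      intro ψ hψ
      rw [List.map_map, List.mem_map] at hψ
      obtain ⟨φ, hφmem, rfl⟩ := hψ
      have hnφ := hnabla _ (List.mem_map.mpr ⟨φ, hφmem, rfl⟩)
      have hIHφ := hIH φ hφmem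
      obtain ⟨c, rfl⟩ := hmem φ hφmem
      have heq : elim p (Formula.neg (.D B (.neg (toFormula P k c)))) =
          Formula.neg (.D B (.neg (elim p (toFormula P k c)))) := by
        rw [elim_neg_ne_atom p _ (by intro q h; cases h)]
        simp only [elim]
        rw [elim_neg_ne_atom p _ (toFormula_ne_atom P k c)]
      simp only [Function.comp_apply]
      rw [heq]
      simp only [Sat] at hnφ ⊢
      push_neg at hnφ ⊢
      obtain ⟨t, hRt, ht⟩ := hnφ
      exact ⟨t, hRt, hIHφ t ht⟩

/-- every d-canonical formula entails its remainder of literal elimination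
over all Kripke models. -/
theorem canonical_entails_elim {n : ℕ} (P : Finset ℕ) (k : ℕ) (δ : Formula n)
    (hδ : δ ∈ DP P k) (p : ℕ) :
    Entails MSys.K δ (elim p δ) := by
  obtain ⟨d, rfl⟩ := hδ
  intro W M _ s hs
  exact sat_elim_toFormula P p k d W M s hs

end DKLogic
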